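/- Let C be a normal monotone circuit in zero-suppressed semantics that is upwards-deterministic. Then every OR-gate of C has at most one outgoing wire whose target is an OR-gate; consequently, every OR-component of C, viewed as a directed graph, is a forest in which every vertex has out-degree at most one (a reversed forest). -/

import Mathlib

/-- The type of a gate in a monotone circuit: variable gate, AND-gate, or OR-gate. -/
inductive GateType : Type
  | var
  | and
  | or
  deriving DecidableEq

/-- A monotone circuit: a finite DAG of gates with wires, a distinguished output gate,
each gate labeled as a variable gate (carrying a variable label in `ι`), an AND-gate,
or an OR-gate.  Variable gates have no inputs, and the wire relation is acyclic. -/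
structure Circuit (ι : Type) [DecidableEq ι] where
  Gate : Type
  fintypeGate : Fintype Gate
  decEqGate : DecidableEq Gate
  wire : Gate → Gate → Prop
  decWire : ∀ a b : Gate, Decidable (wire a b)
  typ : Gate → GateType
  vlab : Gate → ι
  output : Gate
  var_no_input : ∀ g g' : Gate, typ g' = GateType.var → ¬ wire g g'
  acyclic : ∀ g : Gate, ¬ Relation.TransGen wire g g

attribute [instance] Circuit.fintypeGate Circuit.decEqGate Circuit.decWire

namespace Circuit

variable {ι : Type} [DecidableEq ι]

/-- The inputs of a gate `g`: the gates with a wire to `g`. -/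
def inputs (C : Circuit ι) (g : C.Gate) : Finset C.Gate :=
  Finset.univ.filter fun g' => C.wire g' g

/-- The fan-in of a gate: its number of inputs. -/
def fanin (C : Circuit ι) (g : C.Gate) : ℕ :=
  (C.inputs g).card

/-- The gates that `g` is an input of. -/
def outs (C : Circuit ι) (g : C.Gate) : Finset C.Gate :=
  Finset.univ.filter fun g' => C.wire g g'

/-- The size of a circuit: its number of gates plus its number of wires. -/
noncomputable def size (C : Circuit ι) : ℕ :=
  Fintype.card C.Gate + {p : C.Gate × C.Gate | C.wire p.1 p.2}.ncard

/-- Zero-suppressed semantics: `Captures C g t` says that the assignment `t`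
(a finite set of variables) belongs to the set captured by gate `g`, defined bottom-up:
a variable gate captures exactly its own singleton; an AND-gate captures the unions of
assignments captured by its inputs (one from each input); an OR-gate captures the union
of the sets captured by its inputs. -/
inductive Captures (C : Circuit ι) : C.Gate → Finset ι → Prop
  | var (g : C.Gate) (h : C.typ g = GateType.var) : Captures C g {C.vlab g}
  | and (g : C.Gate) (h : C.typ g = GateType.and) (f : C.Gate → Finset ι)
      (hf : ∀ g' ∈ C.inputs g, Captures C g' (f g')) :
      Captures C g ((C.inputs g).biUnion f)
  | or (g : C.Gate) (h : C.typ g = GateType.or) (g' : C.Gate) (hg' : g' ∈ C.inputs g)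
      (t : Finset ι) (ht : Captures C g' t) : Captures C g t

/-- The set `S(g)` of assignments captured by a gate `g` in zero-suppressed semantics. -/
def S (C : Circuit ι) (g : C.Gate) : Set (Finset ι) :=
  {t | C.Captures g t}

/-- The captured set `S(C)` of the circuit: the captured set of its output gate. -/
def captured (C : Circuit ι) : Set (Finset ι) :=
  C.S C.output

/-- `C.Reaches g g'` holds when there is a (possibly empty) directed path of wires
from `g` to `g'`. -/
def Reaches (C : Circuit ι) : C.Gate → C.Gate → Prop :=
  Relation.ReflTransGen C.wire

/-- An AND-gate is decomposable if no variable gate has directed paths to two distinct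
inputs of it. -/
def DecomposableAnd (C : Circuit ι) (g : C.Gate) : Prop :=
  ∀ v g1 g2 : C.Gate, C.typ v = GateType.var → g1 ∈ C.inputs g → g2 ∈ C.inputs g →
    g1 ≠ g2 → C.Reaches v g1 → C.Reaches v g2 → False

/-- An OR-gate is deterministic if the captured sets of any two distinct inputs
are disjoint. -/
def DeterministicOr (C : Circuit ι) (g : C.Gate) : Prop :=
  ∀ g1 g2 : C.Gate, g1 ∈ C.inputs g → g2 ∈ C.inputs g → g1 ≠ g2 →
    Disjoint (C.S g1) (C.S g2)

/-- A circuit is a d-DNNF in zero-suppressed semantics if every AND-gate is decomposable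
and every OR-gate is deterministic. -/
def dDNNF (C : Circuit ι) : Prop :=
  (∀ g : C.Gate, C.typ g = GateType.and → C.DecomposableAnd g) ∧
  (∀ g : C.Gate, C.typ g = GateType.or → C.DeterministicOr g)

/-- Distinct variable gates carry distinct variable labels (i.e., variables can be
identified with variable gates, as in the paper). -/
def VarInj (C : Circuit ι) : Prop :=
  Set.InjOn C.vlab {g : C.Gate | C.typ g = GateType.var}

/-- `C` is ∅-pruned: every gate captures a nonempty set (no gate is unsatisfiable). -/
def EmptyPruned (C : Circuit ι) : Prop :=
  ∀ g : C.Gate, (C.S g).Nonempty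

/-- `C` is {}-pruned: no gate captures a set containing the empty assignment. -/
def ZeroPruned (C : Circuit ι) : Prop :=
  ∀ g : C.Gate, (∅ : Finset ι) ∉ C.S g

/-- An exit: an OR-gate having an input which is not an OR-gate. -/
def IsExit (C : Circuit ι) (g : C.Gate) : Prop :=
  C.typ g = GateType.or ∧ ∃ g' ∈ C.inputs g, C.typ g' ≠ GateType.or

/-- A normal circuit: arity-two, ∅-pruned, {}-pruned, collapsed, and discriminative. -/
def Normal (C : Circuit ι) : Prop :=
  (∀ g : C.Gate, C.fanin g ≤ 2) ∧
  C.EmptyPruned ∧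
  C.ZeroPruned ∧
  (∀ g : C.Gate, C.typ g = GateType.and → C.fanin g ≠ 1) ∧
  (∀ g : C.Gate, C.IsExit g →
    C.fanin g = 1 ∧ (C.outs g).card = 1 ∧ ∀ g' : C.Gate, C.wire g g' → C.typ g' = GateType.or)

/-- A wire both of whose endpoints are OR-gates. -/
def orWire (C : Circuit ι) (a b : C.Gate) : Prop :=
  C.wire a b ∧ C.typ a = GateType.or ∧ C.typ b = GateType.or

/-- The OR-component of an OR-gate `g`: the OR-gates connected to `g` by paths
traversing, in either direction, only wires both of whose endpoints are OR-gates. -/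
def orComponent (C : Circuit ι) (g : C.Gate) : Set C.Gate :=
  {g' : C.Gate | C.typ g' = GateType.or ∧
    Relation.ReflTransGen (fun x y => C.orWire x y ∨ C.orWire y x) g g'}

/-- The exits of an OR-gate `g`: the exits of its OR-component having a directed path
to `g` within the OR-component. -/
def exitsOf (C : Circuit ι) (g : C.Gate) : Set C.Gate :=
  {e : C.Gate | C.IsExit e ∧ Relation.ReflTransGen C.orWire e g}

/-- An OR-path of `C`: a directed path (of length at least one) all of whose
intermediate gates are OR-gates. -/
inductive OrPath (C : Circuit ι) : C.Gate → C.Gate → Prop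
  | single (a b : C.Gate) (h : C.wire a b) : OrPath C a b
  | step (a m b : C.Gate) (h : C.wire a m) (hm : C.typ m = GateType.or)
      (hp : OrPath C m b) : OrPath C a b

/-- A gate is 0-valid if it captures the empty assignment. -/
def ZeroValid (C : Circuit ι) (g : C.Gate) : Prop :=
  (∅ : Finset ι) ∈ C.S g

/-- A wire `(g, g')` is pure if `g'` is an OR-gate, or `g'` is an AND-gate all of whose
other inputs are 0-valid. -/
def PureWire (C : Circuit ι) (g g' : C.Gate) : Prop :=
  C.wire g g' ∧
    (C.typ g' = GateType.or ∨
      (C.typ g' = GateType.and ∧ ∀ h ∈ C.inputs g', h ≠ g → C.ZeroValid h))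

/-- A gate `g` is upwards-deterministic if it is unsatisfiable or there is at most one
gate `g'` such that `(g, g')` is a pure wire. -/
def UpDetGate (C : Circuit ι) (g : C.Gate) : Prop :=
  C.S g = ∅ ∨ ∀ g1 g2 : C.Gate, C.PureWire g g1 → C.PureWire g g2 → g1 = g2

/-- A circuit is upwards-deterministic if all its AND-gates and OR-gates are. -/
def UpwardsDeterministic (C : Circuit ι) : Prop :=
  ∀ g : C.Gate, (C.typ g = GateType.and ∨ C.typ g = GateType.or) → C.UpDetGate g

end Circuit

/-- Let `C` be a normal monotone circuit in zero-suppressed semantics that is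
upwards-deterministic.  Then every OR-gate of `C` has at most one outgoing wire whose
target is an OR-gate; consequently, every OR-component of `C`, viewed as a directed
graph, is acyclic with every vertex of out-degree at most one (a reversed forest). -/
theorem stmt15 {ι : Type} [DecidableEq ι] (C : Circuit ι) (hV : C.VarInj)
    (hN : C.Normal) (hU : C.UpwardsDeterministic) :
    (∀ g g1 g2 : C.Gate, C.typ g = GateType.or → C.typ g1 = GateType.or →
      C.typ g2 = GateType.or → C.wire g g1 → C.wire g g2 → g1 = g2) ∧
    (∀ g : C.Gate, C.typ g = GateType.or →
      (∀ a : C.Gate, ¬ Relation.TransGen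
        (fun x y => x ∈ C.orComponent g ∧ y ∈ C.orComponent g ∧ C.wire x y) a a) ∧
      (∀ a : C.Gate,
        {b : C.Gate | a ∈ C.orComponent g ∧ b ∈ C.orComponent g ∧ C.wire a b}.Subsingleton)) := by
  have key : ∀ g g1 g2 : C.Gate, C.typ g = GateType.or → C.typ g1 = GateType.or →
      C.typ g2 = GateType.or → C.wire g g1 → C.wire g g2 → g1 = g2 := by
    intro g g1 g2 hg hg1 hg2 hw1 hw2
    have hud := hU g (Or.inr hg)
    rcases hud with hS | huniq
    · exfalso
      obtain ⟨t, ht⟩ := hN.2.1 g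
      rw [hS] at ht
      exact ht
    · exact huniq g1 g2 ⟨hw1, Or.inl hg1⟩ ⟨hw2, Or.inl hg2⟩
  refine ⟨key, fun g hg => ⟨fun a hcyc => ?_, fun a b1 hb1 b2 hb2 => ?_⟩⟩
  · exact C.acyclic a (Relation.TransGen.mono (fun x y h => h.2.2) a a hcyc)
  · exact key a b1 b2 hb1.1.1 hb1.2.1.1 hb2.2.1.1 hb1.2.2 hb2.2.2
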